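/- arXiv:1809.01106 — 5 statements merged into one kernel-verified Lean document; each statement's English description precedes it below -/
import Mathlib

section
/- Let K ⊆ ℝ^m be nonempty, closed, convex; let f̃: K × K → ℝ be continuously differentiable in its first argument with ∇f̃(x;x) = ∇f(x) for all x ∈ K, f̃(·;y) τ-strongly convex uniformly in y, and ∇f̃(x;·) L̃-Lipschitz uniformly in x. Let G⁻ be C¹ and G⁺ convex on K, and let F = Σ_i f_i with each ∇f_j Lipschitz. Define the best-response map x̂(z) = argmin_{x∈K} { f̃(x;z) − ∇G⁻(z)ᵀ(x−z) + (Σ_{j≠i} ∇f_j(z))ᵀ(x−z) + G⁺(x) }. Then z* ∈ K is a fixed point of x̂ (i.e., x̂(z*) = z*) if and only if z* is a d-stationary point of min_{x∈K} F(x) + G⁺(x) − G⁻(x). -/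
open Finset
open scoped RealInnerProductSpace

variable {E : Type*} [NormedAddCommGroup E] [InnerProductSpace ℝ E] [CompleteSpace E]

lemma myLineDeriv (f : E → ℝ) (g z d : E) (hf : HasGradientAt f g z) :
    HasDerivAt (fun t : ℝ => f (z + t • d)) ⟪g, d⟫ 0 := by
  have hline : HasDerivAt (fun t : ℝ => z + t • d) d 0 := by
    simpa using ((hasDerivAt_id (0:ℝ)).smul_const d).const_add z
  have hf' : HasFDerivAt f ((InnerProductSpace.toDual ℝ E) g) (z + (0:ℝ) • d) := by
    simpa using hf.hasFDerivAt
  have h2 := hf'.comp_hasDerivAt (x := (0:ℝ)) hline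
  simp at h2
  exact h2

lemma ge_of_slope (g : ℝ → ℝ) (g' : ℝ) (h : HasDerivAt g g' 0) (C : ℝ)
    (hb : ∀ t ∈ Set.Ioc (0:ℝ) 1, C ≤ (g t - g 0)/t) : C ≤ g' := by
  have hs := (hasDerivAt_iff_tendsto_slope.1 h).mono_left
    (nhdsWithin_mono (0:ℝ) (s := Set.Ioi 0) (t := {0}ᶜ)
      (fun x hx => Set.mem_compl_singleton_iff.2 (ne_of_gt hx)))
  refine ge_of_tendsto hs ?_
  filter_upwards [Ioc_mem_nhdsGT_of_mem (by norm_num : (0:ℝ) ∈ Set.Ico (0:ℝ) 1)] with t ht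
  simpa [slope_def_field, div_eq_inv_mul] using hb t ht

lemma le_of_slope (g : ℝ → ℝ) (g' : ℝ) (h : HasDerivAt g g' 0) (C : ℝ)
    (hb : ∀ t ∈ Set.Ioc (0:ℝ) 1, (g t - g 0)/t ≤ C) : g' ≤ C := by
  have hs := (hasDerivAt_iff_tendsto_slope.1 h).mono_left
    (nhdsWithin_mono (0:ℝ) (s := Set.Ioi 0) (t := {0}ᶜ)
      (fun x hx => Set.mem_compl_singleton_iff.2 (ne_of_gt hx)))
  refine le_of_tendsto hs ?_
  filter_upwards [Ioc_mem_nhdsGT_of_mem (by norm_num : (0:ℝ) ∈ Set.Ico (0:ℝ) 1)] with t ht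
  simpa [slope_def_field, div_eq_inv_mul] using hb t ht

/-- Fixed points of the error-free best-response map coincide with d-stationary points. -/
theorem stmt6 (I mdim : ℕ) (i₀ : Fin I)
    (K : Set (EuclideanSpace ℝ (Fin mdim)))
    (hK : K.Nonempty) (hKc : IsClosed K) (hKconv : Convex ℝ K)
    (fs : Fin I → EuclideanSpace ℝ (Fin mdim) → ℝ)
    (gfs : Fin I → EuclideanSpace ℝ (Fin mdim) → EuclideanSpace ℝ (Fin mdim))
    (hgfs : ∀ j z, HasGradientAt (fs j) (gfs j z) z)
    (Lc : Fin I → ℝ)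
    (hLip : ∀ j, ∀ a ∈ K, ∀ b ∈ K, ‖gfs j a - gfs j b‖ ≤ Lc j * ‖a - b‖)
    (ftilde : EuclideanSpace ℝ (Fin mdim) → EuclideanSpace ℝ (Fin mdim) → ℝ)
    (gft : EuclideanSpace ℝ (Fin mdim) → EuclideanSpace ℝ (Fin mdim) →
      EuclideanSpace ℝ (Fin mdim))
    (hgft : ∀ y z, HasGradientAt (fun w => ftilde w z) (gft y z) y)
    (τ : ℝ) (hτ : 0 < τ)
    (hstrong : ∀ y, StrongConvexOn K τ (fun w => ftilde w y))
    (hconsist : ∀ z ∈ K, gft z z = gfs i₀ z)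
    (Ltil : ℝ)
    (hgftLip : ∀ w, ∀ a ∈ K, ∀ b ∈ K, ‖gft w a - gft w b‖ ≤ Ltil * ‖a - b‖)
    (Gm : EuclideanSpace ℝ (Fin mdim) → ℝ)
    (gGm : EuclideanSpace ℝ (Fin mdim) → EuclideanSpace ℝ (Fin mdim))
    (hGm : ∀ z, HasGradientAt Gm (gGm z) z)
    (Gp : EuclideanSpace ℝ (Fin mdim) → ℝ) (hGp : ConvexOn ℝ K Gp)
    (xhat : EuclideanSpace ℝ (Fin mdim) → EuclideanSpace ℝ (Fin mdim))
    (hxhat_mem : ∀ z ∈ K, xhat z ∈ K)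
    (hxhat_min : ∀ z ∈ K, ∀ w ∈ K,
      ftilde (xhat z) z - ⟪gGm z, xhat z - z⟫
          + ⟪∑ j ∈ Finset.univ.erase i₀, gfs j z, xhat z - z⟫ + Gp (xhat z) ≤
        ftilde w z - ⟪gGm z, w - z⟫
          + ⟪∑ j ∈ Finset.univ.erase i₀, gfs j z, w - z⟫ + Gp w)
    (hxhat_unique : ∀ z ∈ K, ∀ v ∈ K,
      (∀ w ∈ K,
        ftilde v z - ⟪gGm z, v - z⟫
            + ⟪∑ j ∈ Finset.univ.erase i₀, gfs j z, v - z⟫ + Gp v ≤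
          ftilde w z - ⟪gGm z, w - z⟫
            + ⟪∑ j ∈ Finset.univ.erase i₀, gfs j z, w - z⟫ + Gp w) → v = xhat z) :
    ∀ zs ∈ K, (xhat zs = zs ↔
      ∀ w ∈ K, 0 ≤ ⟪(∑ j, gfs j zs) - gGm zs, w - zs⟫ + Gp w - Gp zs) := by

  intro zs hzs
  set c : EuclideanSpace ℝ (Fin mdim) :=
    (∑ j ∈ Finset.univ.erase i₀, gfs j zs) - gGm zs with hc
  -- the surrogate objective rewritten
  have hobj : ∀ w : EuclideanSpace ℝ (Fin mdim),
      ftilde w zs - ⟪gGm zs, w - zs⟫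
          + ⟪∑ j ∈ Finset.univ.erase i₀, gfs j zs, w - zs⟫ + Gp w
        = ftilde w zs + ⟪c, w - zs⟫ + Gp w := by
    intro w
    rw [hc, inner_sub_left]
    ring
  -- the stationarity vector rewritten
  have hvec : (∑ j, gfs j zs) - gGm zs = gft zs zs + c := by
    rw [hc, hconsist zs hzs, ← Finset.add_sum_erase Finset.univ (fun j => gfs j zs)
      (Finset.mem_univ i₀)]
    abel
  have hVIeq : ∀ w : EuclideanSpace ℝ (Fin mdim),
      ⟪(∑ j, gfs j zs) - gGm zs, w - zs⟫ = ⟪gft zs zs, w - zs⟫ + ⟪c, w - zs⟫ := by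
    intro w; rw [hvec, inner_add_left]
  -- membership of segment points
  have hmem : ∀ w ∈ K, ∀ t ∈ Set.Ioc (0:ℝ) 1, zs + t • (w - zs) ∈ K := by
    intro w hw t ht
    have h1 : (1 - t) • zs + t • w ∈ K :=
      hKconv hzs hw (by linarith [ht.2]) (le_of_lt ht.1) (by ring)
    have h2 : zs + t • (w - zs) = (1 - t) • zs + t • w := by
      simp [smul_sub, sub_smul, one_smul]; abel
    rwa [h2]
  -- line derivative of ftilde
  have hderiv : ∀ w : EuclideanSpace ℝ (Fin mdim),
      HasDerivAt (fun t : ℝ => ftilde (zs + t • (w - zs)) zs)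
        ⟪gft zs zs, w - zs⟫ 0 :=
    fun w => myLineDeriv (fun x => ftilde x zs) (gft zs zs) zs (w - zs) (hgft zs zs)
  have hcv : ConvexOn ℝ K (fun w => ftilde w zs) :=
    ((hstrong zs).strictConvexOn hτ).convexOn
  -- subgradient inequality from convexity
  have hsub : ∀ w ∈ K, ⟪gft zs zs, w - zs⟫ ≤ ftilde w zs - ftilde zs zs := by
    intro w hw
    refine le_of_slope _ _ (hderiv w) _ ?_
    intro t ht
    have hpt : ftilde (zs + t • (w - zs)) zs ≤ (1 - t) * ftilde zs zs + t * ftilde w zs := by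
      have h1 := hcv.2 hzs hw (by linarith [ht.2] : (0:ℝ) ≤ 1 - t) (le_of_lt ht.1)
        (by ring : (1 - t) + t = 1)
      have h2 : zs + t • (w - zs) = (1 - t) • zs + t • w := by
        simp [smul_sub, sub_smul, one_smul]; abel
      simpa [h2, smul_eq_mul] using h1
    rw [div_le_iff₀ ht.1]
    simp only [zero_smul, add_zero]
    nlinarith [ht.1]
  constructor
  · -- fixed point → stationarity
    intro hfix w hw
    have key : (0:ℝ) ≤ ⟪gft zs zs, w - zs⟫ + ⟪c, w - zs⟫ + Gp w - Gp zs := by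
      have hC : -(⟪c, w - zs⟫ + Gp w - Gp zs) ≤ ⟪gft zs zs, w - zs⟫ := by
        refine ge_of_slope _ _ (hderiv w) _ ?_
        intro t ht
        set p := zs + t • (w - zs) with hp
        have hpK : p ∈ K := hmem w hw t ht
        have hmin := hxhat_min zs hzs p hpK
        rw [hfix] at hmin
        rw [hobj zs, hobj p] at hmin
        have hGpp : Gp p ≤ (1 - t) * Gp zs + t * Gp w := by
          have h1 := hGp.2 hzs hw (by linarith [ht.2] : (0:ℝ) ≤ 1 - t) (le_of_lt ht.1)
            (by ring : (1 - t) + t = 1)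
          have h2 : p = (1 - t) • zs + t • w := by
            rw [hp]; simp [smul_sub, sub_smul, one_smul]; abel
          simpa [h2, smul_eq_mul] using h1
        have hip : ⟪c, p - zs⟫ = t * ⟪c, w - zs⟫ := by
          rw [hp, add_sub_cancel_left, real_inner_smul_right]
        rw [hip] at hmin
        simp only [sub_self, inner_zero_right] at hmin
        rw [le_div_iff₀ ht.1]
        simp only [hp, zero_smul, add_zero]
        nlinarith [ht.1]
      linarith
    rw [hVIeq w]
    linarith
  · -- stationarity → fixed point
    intro hVI
    have key : ∀ w ∈ K,
        ftilde zs zs - ⟪gGm zs, zs - zs⟫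
            + ⟪∑ j ∈ Finset.univ.erase i₀, gfs j zs, zs - zs⟫ + Gp zs ≤
          ftilde w zs - ⟪gGm zs, w - zs⟫
            + ⟪∑ j ∈ Finset.univ.erase i₀, gfs j zs, w - zs⟫ + Gp w := by
      intro w hw
      rw [hobj zs, hobj w]
      have h1 := hVI w hw
      rw [hVIeq w] at h1
      have h2 := hsub w hw
      simp only [sub_self, inner_zero_right]
      linarith
    exact (hxhat_unique zs hzs zs hzs key).symm
end

section
/- Under the same assumptions on K, f̃ (with ∇f̃(x;x) = ∇f(x), τ-strong convexity in the first argument, and L̃-Lipschitz continuity of ∇f̃(x;·)), G⁺ convex, G⁻ with L_G-Lipschitz gradient, and each ∇f_j L_j-Lipschitz with L = Σ_j L_j: the best-response map x̂(z) = argmin_{x∈K} { f̃(x;z) − ∇G⁻(z)ᵀ(x−z) + (Σ_{j≠i} ∇f_j(z))ᵀ(x−z) + G⁺(x) } is Lipschitz continuous on K; concretely, there exists a finite L̂ > 0 (depending on τ, L̃, L_G, L) such that ‖x̂(z) − x̂(w)‖ ≤ L̂ ‖z − w‖ for all z, w ∈ K. -/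
open Finset Set Filter
open scoped RealInnerProductSpace Topology

section helpers
variable {E : Type*} [NormedAddCommGroup E] [InnerProductSpace ℝ E]

lemma deriv_le_of_slope {φ : ℝ → ℝ} {D c : ℝ} (hφ : HasDerivAt φ D 0)
    (h : ∀ t ∈ Set.Ioc (0:ℝ) 1, φ t ≤ φ 0 + t * c) : D ≤ c := by
  rw [hasDerivAt_iff_tendsto_slope] at hφ
  have h2 : Tendsto (slope φ 0) (𝓝[>] (0:ℝ)) (𝓝 D) :=
    hφ.mono_left (nhdsWithin_mono _ fun t ht => ne_of_gt ht)
  refine le_of_tendsto h2 ?_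
  filter_upwards [Ioc_mem_nhdsGT (zero_lt_one)] with t ht
  have := h t ht
  rw [slope_def_field, sub_zero, div_le_iff₀ ht.1]
  nlinarith [ht.1]

lemma deriv_ge_of_slope {φ : ℝ → ℝ} {D c : ℝ} (hφ : HasDerivAt φ D 0)
    (h : ∀ t ∈ Set.Ioc (0:ℝ) 1, φ 0 + t * c ≤ φ t) : c ≤ D := by
  rw [hasDerivAt_iff_tendsto_slope] at hφ
  have h2 : Tendsto (slope φ 0) (𝓝[>] (0:ℝ)) (𝓝 D) :=
    hφ.mono_left (nhdsWithin_mono _ fun t ht => ne_of_gt ht)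
  refine ge_of_tendsto h2 ?_
  filter_upwards [Ioc_mem_nhdsGT (zero_lt_one)] with t ht
  have := h t ht
  rw [slope_def_field, sub_zero, le_div_iff₀ ht.1]
  nlinarith [ht.1]

lemma line_hasDerivAt [CompleteSpace E] (ψ : E → ℝ) (g a b : E) (hg : HasGradientAt ψ g b) :
    HasDerivAt (fun t : ℝ => ψ (b + t • (a - b))) ⟪g, a - b⟫ 0 := by
  have hline : HasDerivAt (fun t : ℝ => b + t • (a - b)) (a - b) 0 := by
    simpa using ((hasDerivAt_id (0:ℝ)).smul_const (a - b)).const_add b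
  have h0 : b + (0:ℝ) • (a - b) = b := by simp
  have hf := hg.hasFDerivAt
  rw [← h0] at hf
  have := hf.comp_hasDerivAt (0:ℝ) hline
  simpa [InnerProductSpace.toDual_apply_apply, Function.comp_def] using this

lemma line_norm_sq_hasDerivAt (a b : E) (τ : ℝ) :
    HasDerivAt (fun t : ℝ => τ / 2 * ‖b + t • (a - b)‖ ^ 2) (τ * ⟪b, a - b⟫) 0 := by
  have hline : HasDerivAt (fun t : ℝ => b + t • (a - b)) (a - b) 0 := by
    simpa using ((hasDerivAt_id (0:ℝ)).smul_const (a - b)).const_add b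
  have := (hline.norm_sq).const_mul (τ / 2)
  simp only [zero_smul, add_zero] at this
  rw [show τ * ⟪b, a - b⟫ = τ / 2 * (2 * ⟪b, a - b⟫) by ring]
  exact this

lemma strong_first_order [CompleteSpace E] {K : Set E} {f : E → ℝ} {τ : ℝ} {a b gb : E}
    (hs : StrongConvexOn K τ f) (ha : a ∈ K) (hb : b ∈ K)
    (hgb : HasGradientAt f gb b) :
    ⟪gb, a - b⟫ - τ * ⟪b, a - b⟫ ≤
      (f a - τ / 2 * ‖a‖ ^ 2) - (f b - τ / 2 * ‖b‖ ^ 2) := by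
  have hc : ConvexOn ℝ K fun x => f x - τ / 2 * ‖x‖ ^ 2 := strongConvexOn_iff_convex.mp hs
  refine deriv_le_of_slope ((line_hasDerivAt f gb a b hgb).sub (line_norm_sq_hasDerivAt a b τ)) ?_
  intro t ht
  have hcomb := hc.2 hb ha (by linarith [ht.2] : (0:ℝ) ≤ 1 - t) ht.1.le
    (by ring : (1 - t) + t = 1)
  have heq : (1 - t) • b + t • a = b + t • (a - b) := by module
  rw [heq] at hcomb
  simp only [smul_eq_mul, zero_smul, add_zero, Pi.sub_apply] at hcomb ⊢
  nlinarith [hcomb]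

lemma strong_mono [CompleteSpace E] {K : Set E} {f : E → ℝ} {τ : ℝ} {a b ga gb : E}
    (hs : StrongConvexOn K τ f) (ha : a ∈ K) (hb : b ∈ K)
    (hga : HasGradientAt f ga a) (hgb : HasGradientAt f gb b) :
    τ * ‖a - b‖ ^ 2 ≤ ⟪ga - gb, a - b⟫ := by
  have h1 := strong_first_order hs ha hb hgb
  have h2 := strong_first_order hs hb ha hga
  have e1 : ⟪ga, b - a⟫ = -⟪ga, a - b⟫ := by rw [← inner_neg_right]; congr 1; abel
  have e2 : ⟪a, b - a⟫ = -⟪a, a - b⟫ := by rw [← inner_neg_right]; congr 1; abel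
  have e3 : ⟪a - b, a - b⟫ = ‖a - b‖ ^ 2 := real_inner_self_eq_norm_sq _
  simp only [inner_sub_left] at e3 ⊢
  rw [e1, e2] at h2
  have e4 : τ * (⟪a, a - b⟫ - ⟪b, a - b⟫) = τ * ‖a - b‖ ^ 2 := by rw [e3]
  linarith [h1, h2, e4]
end helpers

/-- Lipschitz continuity of the error-free best-response map. -/
theorem stmt7 (I mdim : ℕ) (i₀ : Fin I)
    (K : Set (EuclideanSpace ℝ (Fin mdim)))
    (hK : K.Nonempty) (hKc : IsClosed K) (hKconv : Convex ℝ K)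
    (fs : Fin I → EuclideanSpace ℝ (Fin mdim) → ℝ)
    (gfs : Fin I → EuclideanSpace ℝ (Fin mdim) → EuclideanSpace ℝ (Fin mdim))
    (hgfs : ∀ j z, HasGradientAt (fs j) (gfs j z) z)
    (Lc : Fin I → ℝ)
    (hLip : ∀ j, ∀ a ∈ K, ∀ b ∈ K, ‖gfs j a - gfs j b‖ ≤ Lc j * ‖a - b‖)
    (ftilde : EuclideanSpace ℝ (Fin mdim) → EuclideanSpace ℝ (Fin mdim) → ℝ)
    (gft : EuclideanSpace ℝ (Fin mdim) → EuclideanSpace ℝ (Fin mdim) →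
      EuclideanSpace ℝ (Fin mdim))
    (hgft : ∀ y z, HasGradientAt (fun w => ftilde w z) (gft y z) y)
    (τ : ℝ) (hτ : 0 < τ)
    (hstrong : ∀ y, StrongConvexOn K τ (fun w => ftilde w y))
    (hconsist : ∀ z ∈ K, gft z z = gfs i₀ z)
    (Ltil : ℝ)
    (hgftLip : ∀ w, ∀ a ∈ K, ∀ b ∈ K, ‖gft w a - gft w b‖ ≤ Ltil * ‖a - b‖)
    (Gm : EuclideanSpace ℝ (Fin mdim) → ℝ)
    (gGm : EuclideanSpace ℝ (Fin mdim) → EuclideanSpace ℝ (Fin mdim))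
    (hGm : ∀ z, HasGradientAt Gm (gGm z) z)
    (LG : ℝ)
    (hGmLip : ∀ a ∈ K, ∀ b ∈ K, ‖gGm a - gGm b‖ ≤ LG * ‖a - b‖)
    (Gp : EuclideanSpace ℝ (Fin mdim) → ℝ) (hGp : ConvexOn ℝ K Gp)
    (xhat : EuclideanSpace ℝ (Fin mdim) → EuclideanSpace ℝ (Fin mdim))
    (hxhat_mem : ∀ z ∈ K, xhat z ∈ K)
    (hxhat_min : ∀ z ∈ K, ∀ w ∈ K,
      ftilde (xhat z) z - ⟪gGm z, xhat z - z⟫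
          + ⟪∑ j ∈ Finset.univ.erase i₀, gfs j z, xhat z - z⟫ + Gp (xhat z) ≤
        ftilde w z - ⟪gGm z, w - z⟫
          + ⟪∑ j ∈ Finset.univ.erase i₀, gfs j z, w - z⟫ + Gp w) :
    ∃ Lhat : ℝ, 0 < Lhat ∧
      ∀ z ∈ K, ∀ w ∈ K, ‖xhat z - xhat w‖ ≤ Lhat * ‖z - w‖ := by
  classical
  set S : ℝ := ∑ j ∈ Finset.univ.erase i₀, Lc j with hS
  refine ⟨max ((Ltil + LG + S) / τ) 1, lt_of_lt_of_le one_pos (le_max_right _ _), ?_⟩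
  -- the variational inequality at the minimizer
  have VI : ∀ z ∈ K, ∀ y ∈ K,
      ⟪gft (xhat z) z, xhat z - y⟫ ≤
        ⟪∑ j ∈ Finset.univ.erase i₀, gfs j z, y - xhat z⟫
          - ⟪gGm z, y - xhat z⟫ + Gp y - Gp (xhat z) := by
    intro z hz y hy
    have hxz := hxhat_mem z hz
    have key : -(⟪∑ j ∈ Finset.univ.erase i₀, gfs j z, y - xhat z⟫
          - ⟪gGm z, y - xhat z⟫ + Gp y - Gp (xhat z)) ≤
        ⟪gft (xhat z) z, y - xhat z⟫ := by
      refine deriv_ge_of_slope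
        (line_hasDerivAt (fun v => ftilde v z) (gft (xhat z) z) y (xhat z)
          (hgft (xhat z) z)) ?_
      intro t ht
      have hmem : xhat z + t • (y - xhat z) ∈ K := by
        have hmem' := hKconv hxz hy (by linarith [ht.2] : (0:ℝ) ≤ 1 - t) ht.1.le
          (by ring : (1 - t) + t = 1)
        have heq : (1 - t) • xhat z + t • y = xhat z + t • (y - xhat z) := by module
        rwa [heq] at hmem'
      have hmin := hxhat_min z hz (xhat z + t • (y - xhat z)) hmem
      have hGpc := hGp.2 hxz hy (by linarith [ht.2] : (0:ℝ) ≤ 1 - t) ht.1.le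
        (by ring : (1 - t) + t = 1)
      have heq : (1 - t) • xhat z + t • y = xhat z + t • (y - xhat z) := by module
      rw [heq] at hGpc
      simp only [smul_eq_mul] at hGpc
      have e1 : xhat z + t • (y - xhat z) - z = (xhat z - z) + t • (y - xhat z) := by
        module
      have e2 : ⟪gGm z, xhat z + t • (y - xhat z) - z⟫
          = ⟪gGm z, xhat z - z⟫ + t * ⟪gGm z, y - xhat z⟫ := by
        rw [e1, inner_add_right, real_inner_smul_right]
      have e3 : ⟪∑ j ∈ Finset.univ.erase i₀, gfs j z, xhat z + t • (y - xhat z) - z⟫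
          = ⟪∑ j ∈ Finset.univ.erase i₀, gfs j z, xhat z - z⟫
            + t * ⟪∑ j ∈ Finset.univ.erase i₀, gfs j z, y - xhat z⟫ := by
        rw [e1, inner_add_right, real_inner_smul_right]
      simp only [zero_smul, add_zero]
      linarith [hmin, hGpc, e2, e3]
    have e : ⟪gft (xhat z) z, xhat z - y⟫ = -⟪gft (xhat z) z, y - xhat z⟫ := by
      rw [← inner_neg_right]; congr 1; abel
    rw [e]; linarith [key]
  intro z hz w hw
  have hxz := hxhat_mem z hz
  have hxw := hxhat_mem w hw
  have h1 := VI z hz (xhat w) hxw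
  have h2 := VI w hw (xhat z) hxz
  have erev : xhat w - xhat z = -(xhat z - xhat w) := by abel
  rw [erev] at h1 h2
  simp only [inner_neg_right] at h1 h2
  have hsm := strong_mono (hstrong z) hxz hxw (hgft (xhat z) z) (hgft (xhat w) z)
  have hcross : |⟪gft (xhat w) z - gft (xhat w) w, xhat z - xhat w⟫|
      ≤ (Ltil * ‖z - w‖) * ‖xhat z - xhat w‖ := by
    refine le_trans (abs_real_inner_le_norm _ _) ?_
    exact mul_le_mul_of_nonneg_right (hgftLip (xhat w) z hz w hw) (norm_nonneg _)
  have hSb : ‖(∑ j ∈ Finset.univ.erase i₀, gfs j z)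
      - ∑ j ∈ Finset.univ.erase i₀, gfs j w‖ ≤ S * ‖z - w‖ := by
    have hd : (∑ j ∈ Finset.univ.erase i₀, gfs j z)
        - ∑ j ∈ Finset.univ.erase i₀, gfs j w
        = ∑ j ∈ Finset.univ.erase i₀, (gfs j z - gfs j w) := by
      rw [Finset.sum_sub_distrib]
    rw [hd, hS, Finset.sum_mul]
    exact le_trans (norm_sum_le _ _)
      (Finset.sum_le_sum fun j _ => hLip j z hz w hw)
  have hSi : |⟪(∑ j ∈ Finset.univ.erase i₀, gfs j z)
      - ∑ j ∈ Finset.univ.erase i₀, gfs j w, xhat z - xhat w⟫|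
      ≤ (S * ‖z - w‖) * ‖xhat z - xhat w‖ :=
    le_trans (abs_real_inner_le_norm _ _)
      (mul_le_mul_of_nonneg_right hSb (norm_nonneg _))
  have hGi : |⟪gGm z - gGm w, xhat z - xhat w⟫|
      ≤ (LG * ‖z - w‖) * ‖xhat z - xhat w‖ :=
    le_trans (abs_real_inner_le_norm _ _)
      (mul_le_mul_of_nonneg_right (hGmLip z hz w hw) (norm_nonneg _))
  simp only [inner_sub_left] at hsm hcross hSi hGi
  have hd0 : (0:ℝ) ≤ ‖xhat z - xhat w‖ := norm_nonneg _
  have hn0 : (0:ℝ) ≤ ‖z - w‖ := norm_nonneg _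
  have key : τ * ‖xhat z - xhat w‖ ^ 2
      ≤ (Ltil + LG + S) * ‖z - w‖ * ‖xhat z - xhat w‖ := by
    have c1 := abs_le.mp hcross
    have c2 := abs_le.mp hSi
    have c3 := abs_le.mp hGi
    nlinarith [hsm, h1, h2, c1.1, c1.2, c2.1, c2.2, c3.1, c3.2]
  rcases eq_or_lt_of_le hd0 with h0 | h0
  · have : (0:ℝ) ≤ max ((Ltil + LG + S) / τ) 1 * ‖z - w‖ :=
      mul_nonneg (le_trans zero_le_one (le_max_right _ _)) hn0
    linarith [h0]
  · have step : τ * ‖xhat z - xhat w‖ ≤ (Ltil + LG + S) * ‖z - w‖ := by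
      have := le_of_mul_le_mul_right
        (by nlinarith [key] :
          τ * ‖xhat z - xhat w‖ * ‖xhat z - xhat w‖
            ≤ ((Ltil + LG + S) * ‖z - w‖) * ‖xhat z - xhat w‖) h0
      linarith
    have h4 : ‖xhat z - xhat w‖ ≤ (Ltil + LG + S) / τ * ‖z - w‖ := by
      rw [div_mul_eq_mul_div, le_div_iff₀ hτ]
      nlinarith [step]
    exact le_trans h4 (mul_le_mul_of_nonneg_right (le_max_left _ _) hn0)
end

section
/- Let h: ℝ → ℝ be defined by h(x) = 1 − e^{−θ|x|} for a parameter θ > 0 (the exponential surrogate of the ℓ0 function). Then h admits the DC decomposition h(x) = θ|x| − (θ|x| − h(x)), where g⁻(x) := θ|x| − (1 − e^{−θ|x|}) is convex and differentiable on ℝ with derivative (g⁻)'(x) = sign(x)·θ·(1 − e^{−θ|x|}), and (g⁻)' is Lipschitz continuous with constant θ². -/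
open Real

lemma one_sub_exp_neg_le (t : ℝ) : 1 - Real.exp (-t) ≤ t := by
  nlinarith [Real.add_one_le_exp (-t)]

lemma one_sub_exp_neg_nonneg {t : ℝ} (ht : 0 ≤ t) : 0 ≤ 1 - Real.exp (-t) := by
  have := Real.exp_le_one_iff.mpr (by linarith : (-t) ≤ 0)
  linarith

lemma t_exp_le (t : ℝ) : t * Real.exp (-t) ≤ 1 - Real.exp (-t) := by
  have hmul : Real.exp t * Real.exp (-t) = 1 := by
    rw [← Real.exp_add]; simp
  nlinarith [Real.add_one_le_exp t, Real.exp_pos (-t)]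

lemma hasDeriv_pos (θ x : ℝ) :
    HasDerivAt (fun y : ℝ => θ * y - (1 - Real.exp (-θ * y))) (θ * (1 - Real.exp (-θ * x))) x := by
  have hlin : HasDerivAt (fun y : ℝ => -θ * y) (-θ) x := by
    simpa using (hasDerivAt_id x).const_mul (-θ)
  have he := hlin.exp
  have hid : HasDerivAt (fun y : ℝ => θ * y) θ x := by
    simpa using (hasDerivAt_id x).const_mul θ
  have := hid.sub ((hasDerivAt_const x (1:ℝ)).sub he)
  exact this.congr_deriv (by ring)

lemma hasDeriv_g (θ : ℝ) (hθ : 0 < θ) (x : ℝ) :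
    HasDerivAt (fun x : ℝ => θ * |x| - (1 - Real.exp (-θ * |x|)))
      (Real.sign x * (θ * (1 - Real.exp (-θ * |x|)))) x := by
  rcases lt_trichotomy x 0 with hx | hx | hx
  · rw [Real.sign_of_neg hx, abs_of_neg hx]
    have h1 := (hasDeriv_pos θ (-x)).comp x (hasDerivAt_neg x)
    have hev : (fun y : ℝ => θ * |y| - (1 - Real.exp (-θ * |y|))) =ᶠ[nhds x]
        ((fun y : ℝ => θ * y - (1 - Real.exp (-θ * y))) ∘ fun y => -y) := by
      filter_upwards [Iio_mem_nhds hx] with y hy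
      have hy' : y < 0 := hy
      simp only [Function.comp]
      rw [abs_of_neg hy']
    have h2 := h1.congr_of_eventuallyEq hev
    exact h2.congr_deriv (by ring)
  · subst hx
    rw [hasDerivAt_iff_tendsto_slope]
    simp only [Real.sign_zero, zero_mul]
    set g : ℝ → ℝ := fun x : ℝ => θ * |x| - (1 - Real.exp (-θ * |x|)) with hg
    have key : ∀ y : ℝ, ‖slope g 0 y‖ ≤ θ ^ 2 * |y| := by
      intro y
      rcases eq_or_ne y 0 with rfl | hy
      · simp [slope, hg]
      · have ht0 : 0 ≤ θ * |y| := by positivity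
        have hgy : g y = θ * |y| - (1 - Real.exp (-(θ * |y|))) := by
          simp only [hg]; ring_nf
        have hg0 : 0 ≤ g y := by
          rw [hgy]; have := one_sub_exp_neg_le (θ * |y|); linarith
        have hg1 : g y ≤ θ ^ 2 * |y| * |y| := by
          rw [hgy]
          have h1 := t_exp_le (θ * |y|)
          have h2 : 1 - Real.exp (-(θ * |y|)) ≤ θ * |y| := one_sub_exp_neg_le _
          nlinarith
        have hsl : slope g 0 y = g y / y := by
          rw [slope_def_field]
          simp [hg]
        rw [hsl, Real.norm_eq_abs, abs_div, abs_of_nonneg hg0]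
        rw [div_le_iff₀ (by positivity : (0:ℝ) < |y|)]
        exact hg1
    apply squeeze_zero_norm key
    have h2 : Filter.Tendsto (fun y : ℝ => θ ^ 2 * |y|) (nhds (0:ℝ)) (nhds (θ ^ 2 * |(0:ℝ)|)) :=
      (continuous_const.mul continuous_abs).tendsto 0
    simpa using h2.mono_left nhdsWithin_le_nhds
  · rw [Real.sign_of_pos hx, one_mul, abs_of_pos hx]
    have h1 := hasDeriv_pos θ x
    have hev : (fun y : ℝ => θ * |y| - (1 - Real.exp (-θ * |y|))) =ᶠ[nhds x]
        (fun y : ℝ => θ * y - (1 - Real.exp (-θ * y))) := by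
      filter_upwards [Ioi_mem_nhds hx] with y hy
      simp [abs_of_pos (show (0:ℝ) < y from hy)]
    exact h1.congr_of_eventuallyEq hev

lemma phi_of_nonneg (θ : ℝ) {x : ℝ} (hx : 0 ≤ x) :
    Real.sign x * (θ * (1 - Real.exp (-θ * |x|))) = θ * (1 - Real.exp (-θ * x)) := by
  rcases hx.eq_or_lt with rfl | h
  · simp
  · rw [Real.sign_of_pos h, abs_of_pos h, one_mul]

lemma phi_of_nonpos (θ : ℝ) {x : ℝ} (hx : x ≤ 0) :
    Real.sign x * (θ * (1 - Real.exp (-θ * |x|))) = -(θ * (1 - Real.exp (θ * x))) := by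
  rcases hx.eq_or_lt with rfl | h
  · simp
  · rw [Real.sign_of_neg h, abs_of_neg h, neg_mul_neg, neg_one_mul]

lemma phi_mono (θ : ℝ) (hθ : 0 < θ) :
    Monotone (fun x : ℝ => Real.sign x * (θ * (1 - Real.exp (-θ * |x|)))) := by
  intro a b hab
  simp only
  rcases le_total 0 a with ha | ha
  · rw [phi_of_nonneg θ ha, phi_of_nonneg θ (le_trans ha hab)]
    have : Real.exp (-θ * b) ≤ Real.exp (-θ * a) := by
      apply Real.exp_le_exp.mpr; nlinarith
    nlinarith
  · rcases le_total b 0 with hb | hb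
    · rw [phi_of_nonpos θ ha, phi_of_nonpos θ hb]
      have : Real.exp (θ * a) ≤ Real.exp (θ * b) := by
        apply Real.exp_le_exp.mpr; nlinarith
      nlinarith
    · rw [phi_of_nonpos θ ha, phi_of_nonneg θ hb]
      have h1 : Real.exp (θ * a) ≤ 1 := Real.exp_le_one_iff.mpr (by nlinarith)
      have h2 : Real.exp (-θ * b) ≤ 1 := Real.exp_le_one_iff.mpr (by nlinarith)
      nlinarith

lemma exp_diff_le (θ : ℝ) (hθ : 0 < θ) {a b : ℝ} (ha : 0 ≤ a) (hab : a ≤ b) :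
    Real.exp (-θ * a) - Real.exp (-θ * b) ≤ θ * (b - a) := by
  have hsplit : Real.exp (-θ * b) = Real.exp (-θ * a) * Real.exp (-(θ * (b - a))) := by
    rw [← Real.exp_add]; ring_nf
  have h1 : Real.exp (-θ * a) ≤ 1 := Real.exp_le_one_iff.mpr (by nlinarith)
  have h2 := one_sub_exp_neg_le (θ * (b - a))
  have h3 : 0 ≤ 1 - Real.exp (-(θ * (b - a))) :=
    one_sub_exp_neg_nonneg (by nlinarith)
  nlinarith [Real.exp_pos (-θ * a)]

lemma lip_nonneg (θ : ℝ) (hθ : 0 < θ) {a b : ℝ} (ha : 0 ≤ a) (hb : 0 ≤ b) :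
    |θ * (1 - Real.exp (-θ * a)) - θ * (1 - Real.exp (-θ * b))| ≤ θ ^ 2 * |a - b| := by
  rcases le_total a b with hab | hab
  · have h1 := exp_diff_le θ hθ ha hab
    have h2 : Real.exp (-θ * b) ≤ Real.exp (-θ * a) := by
      apply Real.exp_le_exp.mpr; nlinarith
    rw [abs_of_nonpos (by nlinarith), abs_of_nonpos (by linarith)]
    nlinarith
  · have h1 := exp_diff_le θ hθ hb hab
    have h2 : Real.exp (-θ * a) ≤ Real.exp (-θ * b) := by
      apply Real.exp_le_exp.mpr; nlinarith
    rw [abs_of_nonneg (by nlinarith), abs_of_nonneg (by linarith)]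
    nlinarith

lemma phi_lip (θ : ℝ) (hθ : 0 < θ) (x y : ℝ) :
    |Real.sign x * (θ * (1 - Real.exp (-θ * |x|))) -
      Real.sign y * (θ * (1 - Real.exp (-θ * |y|)))| ≤ θ ^ 2 * |x - y| := by
  rcases le_total 0 x with hx | hx <;> rcases le_total 0 y with hy | hy
  · rw [phi_of_nonneg θ hx, phi_of_nonneg θ hy]
    exact lip_nonneg θ hθ hx hy
  · -- 0 ≤ x, y ≤ 0
    rw [phi_of_nonneg θ hx, phi_of_nonpos θ hy]
    have h1 : 1 - Real.exp (-θ * x) ≤ θ * x := by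
      have := one_sub_exp_neg_le (θ * x); rw [neg_mul]; linarith
    have h1' : 0 ≤ 1 - Real.exp (-θ * x) :=
      one_sub_exp_neg_nonneg (t := θ * x) (by nlinarith) |>.trans_eq (by rw [neg_mul])
    have h2 : 1 - Real.exp (θ * y) ≤ θ * (-y) := by
      have := one_sub_exp_neg_le (θ * (-y))
      have : 1 - Real.exp (-(θ * -y)) ≤ θ * (-y) := this
      rw [show -(θ * -y) = θ * y by ring] at this; linarith
    have h2' : 0 ≤ 1 - Real.exp (θ * y) := by
      have := one_sub_exp_neg_nonneg (t := θ * (-y)) (by nlinarith)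
      rw [show -(θ * -y) = θ * y by ring] at this; linarith
    rw [abs_of_nonneg (by nlinarith), abs_of_nonneg (by linarith)]
    nlinarith
  · -- x ≤ 0, 0 ≤ y
    rw [phi_of_nonpos θ hx, phi_of_nonneg θ hy]
    have h1 : 1 - Real.exp (-θ * y) ≤ θ * y := by
      have := one_sub_exp_neg_le (θ * y); rw [neg_mul]; linarith
    have h1' : 0 ≤ 1 - Real.exp (-θ * y) := by
      have := one_sub_exp_neg_nonneg (t := θ * y) (by nlinarith)
      rw [show -(θ * y) = -θ * y by ring] at this; linarith
    have h2 : 1 - Real.exp (θ * x) ≤ θ * (-x) := by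
      have := one_sub_exp_neg_le (θ * (-x))
      rw [show -(θ * -x) = θ * x by ring] at this; linarith
    have h2' : 0 ≤ 1 - Real.exp (θ * x) := by
      have := one_sub_exp_neg_nonneg (t := θ * (-x)) (by nlinarith)
      rw [show -(θ * -x) = θ * x by ring] at this; linarith
    rw [abs_of_nonpos (by nlinarith), abs_of_nonpos (by linarith)]
    nlinarith
  · rw [phi_of_nonpos θ hx, phi_of_nonpos θ hy]
    have := lip_nonneg θ hθ (a := -x) (b := -y) (by linarith) (by linarith)
    rw [show -θ * -x = θ * x by ring, show -θ * -y = θ * y by ring,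
      show (-x) - (-y) = -(x - y) by ring, abs_neg] at this
    calc |-(θ * (1 - Real.exp (θ * x))) - -(θ * (1 - Real.exp (θ * y)))|
        = |θ * (1 - Real.exp (θ * x)) - θ * (1 - Real.exp (θ * y))| := by
          rw [← abs_neg]; ring_nf
      _ ≤ θ ^ 2 * |x - y| := this

/-- DC decomposition of the exponential surrogate of the ℓ0 function. -/
theorem stmt9 (θ : ℝ) (hθ : 0 < θ) :
    (∀ x : ℝ, 1 - Real.exp (-θ * |x|) =
      θ * |x| - (θ * |x| - (1 - Real.exp (-θ * |x|)))) ∧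
    ConvexOn ℝ Set.univ (fun x : ℝ => θ * |x| - (1 - Real.exp (-θ * |x|))) ∧
    (∀ x : ℝ, HasDerivAt (fun x : ℝ => θ * |x| - (1 - Real.exp (-θ * |x|)))
      (Real.sign x * (θ * (1 - Real.exp (-θ * |x|)))) x) ∧
    (∀ x y : ℝ,
      |Real.sign x * (θ * (1 - Real.exp (-θ * |x|))) -
        Real.sign y * (θ * (1 - Real.exp (-θ * |y|)))| ≤ θ ^ 2 * |x - y|) := by
  refine ⟨fun x => by ring, ?_, hasDeriv_g θ hθ, phi_lip θ hθ⟩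
  have hdiff : Differentiable ℝ (fun x : ℝ => θ * |x| - (1 - Real.exp (-θ * |x|))) :=
    fun x => (hasDeriv_g θ hθ x).differentiableAt
  have hderiv : deriv (fun x : ℝ => θ * |x| - (1 - Real.exp (-θ * |x|))) =
      fun x : ℝ => Real.sign x * (θ * (1 - Real.exp (-θ * |x|))) :=
    funext fun x => (hasDeriv_g θ hθ x).deriv
  apply Monotone.convexOn_univ_of_deriv hdiff
  rw [hderiv]
  exact phi_mono θ hθ
end

section
/- Under SONATA's assumptions (f̃_i τ_i-strongly convex with ∇f̃_i(x;x) = ∇f_i(x) and ∇f̃_i(x;·) L̃_i-Lipschitz; each ∇f_j L_j-Lipschitz with L = Σ_j L_j), let x̃_i^n be the minimizer of the surrogate subproblem using the tracked direction I·y_i^n, and x̂_i(x_i^n) the error-free best response using the true gradient sum Σ_{j≠i} ∇f_j(x_i^n). Then ‖x̂_i(x_i^n) − x̃_i^n‖ ≤ (I/τ_i) ‖e_y^n‖ + (2IL/τ_i) ‖e_x^n‖, where e_y^n is the tracking disagreement (stacked deviations of y_j^n from their weighted average, which equals the gradient average) and e_x^n is the consensus disagreement of the x_j^n. In particular, if ‖e_x^n‖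 → 0 and ‖e_y^n‖ → 0 then ‖x̂_i(x_i^n) − x̃_i^n‖ → 0. -/
open Finset Filter
open scoped RealInnerProductSpace

lemma convexOn_inner_right {E : Type*} [NormedAddCommGroup E] [InnerProductSpace ℝ E]
    {K : Set E} (hK : Convex ℝ K) (c : E) :
    ConvexOn ℝ K (fun w => ⟪c, w⟫) := by
  refine ⟨hK, fun x _ y _ a b _ _ _ => le_of_eq ?_⟩
  simp [inner_add_right, inner_smul_right]

lemma min_strong {E : Type*} [NormedAddCommGroup E] [InnerProductSpace ℝ E]
    {K : Set E} {τ : ℝ} (hτ : 0 < τ) {S B : E → ℝ}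
    (hS : StrongConvexOn K τ S) (hB : ConvexOn ℝ K B)
    {u : E} (hu : u ∈ K) (hmin : ∀ w ∈ K, S u + B u ≤ S w + B w)
    {w : E} (hw : w ∈ K) :
    S u + B u + τ / 2 * ‖w - u‖ ^ 2 ≤ S w + B w := by
  have key : ∀ t ∈ Set.Ioo (0:ℝ) 1,
      (1 - t) * (τ / 2 * ‖w - u‖ ^ 2) ≤ (S w + B w) - (S u + B u) := by
    intro t ht
    have ha : (0:ℝ) ≤ 1 - t := by linarith [ht.2]
    have hb : (0:ℝ) ≤ t := le_of_lt ht.1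
    have hab : (1 - t) + t = 1 := by ring
    have hp : (1 - t) • u + t • w ∈ K := hS.1 hu hw ha hb hab
    have hSp := hS.2 hu hw ha hb hab
    have hBp := hB.2 hu hw ha hb hab
    have hmin' := hmin _ hp
    have hnorm : ‖u - w‖ = ‖w - u‖ := norm_sub_rev u w
    simp only [smul_eq_mul, hnorm] at hSp hBp
    have h2 : t * ((1 - t) * (τ / 2 * ‖w - u‖ ^ 2)) ≤
        t * ((S w + B w) - (S u + B u)) := by nlinarith [ht.1]
    exact le_of_mul_le_mul_left h2 ht.1
  have hlim : Tendsto (fun t : ℝ => (1 - t) * (τ / 2 * ‖w - u‖ ^ 2))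
      (nhdsWithin 0 (Set.Ioo 0 1)) (nhds (τ / 2 * ‖w - u‖ ^ 2)) := by
    have h : Tendsto (fun t : ℝ => (1 - t) * (τ / 2 * ‖w - u‖ ^ 2))
        (nhds 0) (nhds ((1 - 0) * (τ / 2 * ‖w - u‖ ^ 2))) :=
      (tendsto_const_nhds.sub tendsto_id).mul tendsto_const_nhds
    simpa using h.mono_left nhdsWithin_le_nhds
  have hne : (nhdsWithin (0:ℝ) (Set.Ioo 0 1)).NeBot := by
    apply mem_closure_iff_nhdsWithin_neBot.mp
    rw [closure_Ioo one_ne_zero.symm]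
    exact ⟨le_refl 0, zero_le_one⟩
  have := le_of_tendsto hlim (Filter.eventually_of_mem self_mem_nhdsWithin key)
  linarith

lemma gap_bound {E : Type*} [NormedAddCommGroup E] [InnerProductSpace ℝ E]
    {K : Set E} {τ : ℝ} (hτ : 0 < τ) {S B : E → ℝ} (Δ : E)
    (hS : StrongConvexOn K τ S) (hB : ConvexOn ℝ K B)
    {u v : E} (hu : u ∈ K) (hv : v ∈ K)
    (hmu : ∀ w ∈ K, S u + B u ≤ S w + B w)
    (hmv : ∀ w ∈ K, S v + (B v + ⟪Δ, v⟫) ≤ S w + (B w + ⟪Δ, w⟫)) :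
    ‖u - v‖ ≤ ‖Δ‖ / τ := by
  have h1 := min_strong hτ hS hB hu hmu hv
  have hB' : ConvexOn ℝ K (fun w => B w + ⟪Δ, w⟫) :=
    hB.add (convexOn_inner_right hS.1 Δ)
  have h2 := min_strong hτ hS hB' hv hmv hu
  have hns : ‖v - u‖ = ‖u - v‖ := norm_sub_rev v u
  rw [hns] at h1
  have hsum : τ * ‖u - v‖ ^ 2 ≤ ⟪Δ, u - v⟫ := by
    rw [inner_sub_right]; linarith
  have hCS : ⟪Δ, u - v⟫ ≤ ‖Δ‖ * ‖u - v‖ := real_inner_le_norm Δ (u - v)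
  rcases eq_or_lt_of_le (norm_nonneg (u - v)) with h0 | h0
  · rw [← h0]; positivity
  · rw [le_div_iff₀ hτ]
    nlinarith

/-- The gap between the tracked best response x̃ᵢⁿ and the error-free best response
x̂ᵢ(xᵢⁿ) is bounded by the tracking and consensus disagreements, and vanishes with them. -/
theorem stmt16 (I mdim : ℕ) (hI : 0 < I) (i₀ : Fin I)
    (K : Set (EuclideanSpace ℝ (Fin mdim)))
    (hK : K.Nonempty) (hKc : IsClosed K) (hKconv : Convex ℝ K)
    (fs : Fin I → EuclideanSpace ℝ (Fin mdim) → ℝ)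
    (gfs : Fin I → EuclideanSpace ℝ (Fin mdim) → EuclideanSpace ℝ (Fin mdim))
    (hgfs : ∀ j z, HasGradientAt (fs j) (gfs j z) z)
    (Lc : Fin I → ℝ) (hLc : ∀ j, 0 ≤ Lc j)
    (hLip : ∀ j, ∀ a ∈ K, ∀ b ∈ K, ‖gfs j a - gfs j b‖ ≤ Lc j * ‖a - b‖)
    (ftilde : EuclideanSpace ℝ (Fin mdim) → EuclideanSpace ℝ (Fin mdim) → ℝ)
    (gft : EuclideanSpace ℝ (Fin mdim) → EuclideanSpace ℝ (Fin mdim) →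
      EuclideanSpace ℝ (Fin mdim))
    (hgft : ∀ w z, HasGradientAt (fun v => ftilde v z) (gft w z) w)
    (τ : ℝ) (hτ : 0 < τ)
    (hstrong : ∀ z, StrongConvexOn K τ (fun v => ftilde v z))
    (hconsist : ∀ z ∈ K, gft z z = gfs i₀ z)
    (Ltil : ℝ)
    (hgftLip : ∀ w, ∀ a ∈ K, ∀ b ∈ K, ‖gft w a - gft w b‖ ≤ Ltil * ‖a - b‖)
    (Gm : EuclideanSpace ℝ (Fin mdim) → ℝ)
    (gGm : EuclideanSpace ℝ (Fin mdim) → EuclideanSpace ℝ (Fin mdim))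
    (hGm : ∀ z, HasGradientAt Gm (gGm z) z)
    (Gp : EuclideanSpace ℝ (Fin mdim) → ℝ) (hGp : ConvexOn ℝ K Gp)
    -- iterates, weights and trackers
    (x y : ℕ → Fin I → EuclideanSpace ℝ (Fin mdim))
    (hxK : ∀ n j, x n j ∈ K)
    (φ : ℕ → Fin I → ℝ)
    (hφ_nonneg : ∀ n j, 0 ≤ φ n j) (hφ_sum : ∀ n, ∑ j, φ n j = (I : ℝ))
    -- tracking identity: the weighted average of the trackers equals the gradient average
    (htrack : ∀ n, (I : ℝ)⁻¹ • ∑ j, φ n j • y n j = (I : ℝ)⁻¹ • ∑ j, gfs j (x n j))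
    -- x̃ⁿ: minimizer of the surrogate subproblem with the tracked direction I·y_{i₀}ⁿ
    (xt : ℕ → EuclideanSpace ℝ (Fin mdim)) (hxtK : ∀ n, xt n ∈ K)
    (hxt_min : ∀ n, ∀ w ∈ K,
      ftilde (xt n) (x n i₀) - ⟪gGm (x n i₀), xt n - x n i₀⟫
          + ⟪(I : ℝ) • y n i₀ - gfs i₀ (x n i₀), xt n - x n i₀⟫ + Gp (xt n) ≤
        ftilde w (x n i₀) - ⟪gGm (x n i₀), w - x n i₀⟫
          + ⟪(I : ℝ) • y n i₀ - gfs i₀ (x n i₀), w - x n i₀⟫ + Gp w)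
    -- x̂ᵢ(xᵢⁿ): error-free best response using the true gradient sum
    (xh : ℕ → EuclideanSpace ℝ (Fin mdim)) (hxhK : ∀ n, xh n ∈ K)
    (hxh_min : ∀ n, ∀ w ∈ K,
      ftilde (xh n) (x n i₀) - ⟪gGm (x n i₀), xh n - x n i₀⟫
          + ⟪∑ j ∈ Finset.univ.erase i₀, gfs j (x n i₀), xh n - x n i₀⟫ + Gp (xh n) ≤
        ftilde w (x n i₀) - ⟪gGm (x n i₀), w - x n i₀⟫
          + ⟪∑ j ∈ Finset.univ.erase i₀, gfs j (x n i₀), w - x n i₀⟫ + Gp w) :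
    (∀ n, ‖xh n - xt n‖ ≤
        ((I : ℝ) / τ) *
            Real.sqrt (∑ j, ‖y n j - (I : ℝ)⁻¹ • ∑ l, φ n l • y n l‖ ^ 2)
          + (2 * (I : ℝ) * (∑ j, Lc j) / τ) *
            Real.sqrt (∑ j, ‖x n j - (I : ℝ)⁻¹ • ∑ l, φ n l • x n l‖ ^ 2)) ∧
    (Tendsto (fun n =>
        Real.sqrt (∑ j, ‖x n j - (I : ℝ)⁻¹ • ∑ l, φ n l • x n l‖ ^ 2))
        atTop (nhds 0) →
      Tendsto (fun n =>
        Real.sqrt (∑ j, ‖y n j - (I : ℝ)⁻¹ • ∑ l, φ n l • y n l‖ ^ 2))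
        atTop (nhds 0) →
      Tendsto (fun n => ‖xh n - xt n‖) atTop (nhds 0)) := by
  classical
  have hIne : ((I : ℝ)) ≠ 0 := by
    have : (0:ℝ) < I := by exact_mod_cast hI
    exact ne_of_gt this
  have hI1 : (1:ℝ) ≤ I := by exact_mod_cast hI
  have hLsum : 0 ≤ ∑ j, Lc j := Finset.sum_nonneg fun j _ => hLc j
  have hterm : ∀ (v : Fin I → EuclideanSpace ℝ (Fin mdim)) (j : Fin I),
      ‖v j‖ ≤ Real.sqrt (∑ l, ‖v l‖ ^ 2) := by
    intro v j
    rw [show ‖v j‖ = Real.sqrt (‖v j‖ ^ 2) from (Real.sqrt_sq (norm_nonneg _)).symm]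
    exact Real.sqrt_le_sqrt (Finset.single_le_sum (f := fun l => ‖v l‖ ^ 2) (fun l _ => sq_nonneg _) (mem_univ j))
  have hbound : ∀ n, ‖xh n - xt n‖ ≤
      ((I : ℝ) / τ) *
          Real.sqrt (∑ j, ‖y n j - (I : ℝ)⁻¹ • ∑ l, φ n l • y n l‖ ^ 2)
        + (2 * (I : ℝ) * (∑ j, Lc j) / τ) *
          Real.sqrt (∑ j, ‖x n j - (I : ℝ)⁻¹ • ∑ l, φ n l • x n l‖ ^ 2) := by
    intro n
    set z : EuclideanSpace ℝ (Fin mdim) := x n i₀ with hz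
    set dh : EuclideanSpace ℝ (Fin mdim) := ∑ j ∈ Finset.univ.erase i₀, gfs j z with hdh
    set Δ : EuclideanSpace ℝ (Fin mdim) := ((I : ℝ) • y n i₀ - gfs i₀ z) - dh with hΔ
    set ey : ℝ := Real.sqrt (∑ j, ‖y n j - (I : ℝ)⁻¹ • ∑ l, φ n l • y n l‖ ^ 2) with hey
    set ex : ℝ := Real.sqrt (∑ j, ‖x n j - (I : ℝ)⁻¹ • ∑ l, φ n l • x n l‖ ^ 2) with hex
    have hBconv : ConvexOn ℝ K (fun w => ⟪dh - gGm z, w⟫ + Gp w) :=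
      (convexOn_inner_right hKconv _).add hGp
    have hrw : ∀ w : EuclideanSpace ℝ (Fin mdim),
        ftilde w z - ⟪gGm z, w - z⟫ + ⟪dh, w - z⟫ + Gp w
          = (ftilde w z + (⟪dh - gGm z, w⟫ + Gp w)) - ⟪dh - gGm z, z⟫ := by
      intro w
      simp only [inner_sub_right, inner_sub_left]
      ring
    have hrw2 : ∀ w : EuclideanSpace ℝ (Fin mdim),
        ftilde w z - ⟪gGm z, w - z⟫ + ⟪(I : ℝ) • y n i₀ - gfs i₀ z, w - z⟫ + Gp w
          = (ftilde w z + ((⟪dh - gGm z, w⟫ + Gp w) + ⟪Δ, w⟫))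
            - (⟪dh - gGm z, z⟫ + ⟪Δ, z⟫) := by
      intro w
      simp only [hΔ, inner_sub_right, inner_sub_left]
      ring
    have hmu : ∀ w ∈ K,
        ftilde (xh n) z + (⟪dh - gGm z, xh n⟫ + Gp (xh n))
          ≤ ftilde w z + (⟪dh - gGm z, w⟫ + Gp w) := by
      intro w hw
      have h := hxh_min n w hw
      rw [← hz, ← hdh] at h
      rw [hrw (xh n), hrw w] at h
      linarith
    have hmv : ∀ w ∈ K,
        ftilde (xt n) z + ((⟪dh - gGm z, xt n⟫ + Gp (xt n)) + ⟪Δ, xt n⟫)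
          ≤ ftilde w z + ((⟪dh - gGm z, w⟫ + Gp w) + ⟪Δ, w⟫) := by
      intro w hw
      have h := hxt_min n w hw
      rw [← hz] at h
      rw [hrw2 (xt n), hrw2 w] at h
      linarith
    have hgap : ‖xh n - xt n‖ ≤ ‖Δ‖ / τ :=
      gap_bound hτ Δ (hstrong z) hBconv (hxhK n) (hxtK n) hmu hmv
    -- now bound ‖Δ‖
    have hsum_erase : dh + gfs i₀ z = ∑ j, gfs j z := by
      rw [hdh]
      exact Finset.sum_erase_add Finset.univ _ (Finset.mem_univ i₀)
    have hΔeq : Δ = (I : ℝ) • y n i₀ - ∑ j, gfs j z := by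
      rw [hΔ, ← hsum_erase]; abel
    have hIy : (I : ℝ) • ((I : ℝ)⁻¹ • ∑ l, φ n l • y n l) = ∑ j, gfs j (x n j) := by
      rw [htrack n, smul_inv_smul₀ hIne]
    have hsplit : Δ = (I : ℝ) • (y n i₀ - (I : ℝ)⁻¹ • ∑ l, φ n l • y n l)
        + ∑ j, (gfs j (x n j) - gfs j z) := by
      rw [hΔeq, Finset.sum_sub_distrib, smul_sub, hIy]; abel
    have hxbar : ∀ j, ‖x n j - (I : ℝ)⁻¹ • ∑ l, φ n l • x n l‖ ≤ ex :=
      fun j => hterm (fun j => x n j - (I : ℝ)⁻¹ • ∑ l, φ n l • x n l) j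
    have hybar : ‖y n i₀ - (I : ℝ)⁻¹ • ∑ l, φ n l • y n l‖ ≤ ey :=
      hterm (fun j => y n j - (I : ℝ)⁻¹ • ∑ l, φ n l • y n l) i₀
    have hex0 : 0 ≤ ex := Real.sqrt_nonneg _
    have hey0 : 0 ≤ ey := Real.sqrt_nonneg _
    have hΔnorm : ‖Δ‖ ≤ (I : ℝ) * ey + (∑ j, Lc j) * (2 * ex) := by
      rw [hsplit]
      calc ‖(I : ℝ) • (y n i₀ - (I : ℝ)⁻¹ • ∑ l, φ n l • y n l)
            + ∑ j, (gfs j (x n j) - gfs j z)‖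
          ≤ ‖(I : ℝ) • (y n i₀ - (I : ℝ)⁻¹ • ∑ l, φ n l • y n l)‖
            + ‖∑ j, (gfs j (x n j) - gfs j z)‖ := norm_add_le _ _
        _ ≤ (I : ℝ) * ey + ∑ j, Lc j * (2 * ex) := by
            apply add_le_add
            · rw [norm_smul, Real.norm_eq_abs, abs_of_nonneg (by positivity)]
              exact mul_le_mul_of_nonneg_left hybar (by positivity)
            · refine le_trans (norm_sum_le _ _) (Finset.sum_le_sum fun j _ => ?_)
              have h1 : ‖gfs j (x n j) - gfs j z‖ ≤ Lc j * ‖x n j - z‖ :=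
                hLip j _ (hxK n j) _ (hxK n i₀)
              have h2 : ‖x n j - z‖ ≤ 2 * ex := by
                have : x n j - z = (x n j - (I : ℝ)⁻¹ • ∑ l, φ n l • x n l)
                    - (x n i₀ - (I : ℝ)⁻¹ • ∑ l, φ n l • x n l) := by rw [hz]; abel
                rw [this]
                calc ‖_ - _‖ ≤ ‖x n j - (I : ℝ)⁻¹ • ∑ l, φ n l • x n l‖
                      + ‖x n i₀ - (I : ℝ)⁻¹ • ∑ l, φ n l • x n l‖ := norm_sub_le _ _
                  _ ≤ 2 * ex := by linarith [hxbar j, hxbar i₀]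
              calc ‖gfs j (x n j) - gfs j z‖ ≤ Lc j * ‖x n j - z‖ := h1
                _ ≤ Lc j * (2 * ex) := mul_le_mul_of_nonneg_left h2 (hLc j)
        _ = (I : ℝ) * ey + (∑ j, Lc j) * (2 * ex) := by
            rw [← Finset.sum_mul]
    have hΔnorm2 : ‖Δ‖ ≤ (I : ℝ) * ey + 2 * (I : ℝ) * (∑ j, Lc j) * ex := by
      nlinarith [mul_nonneg (mul_nonneg (sub_nonneg.mpr hI1) hLsum) hex0]
    calc ‖xh n - xt n‖ ≤ ‖Δ‖ / τ := hgap
      _ ≤ ((I : ℝ) * ey + 2 * (I : ℝ) * (∑ j, Lc j) * ex) / τ :=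
          (div_le_div_iff_of_pos_right hτ).mpr hΔnorm2
      _ = ((I : ℝ) / τ) * ey + (2 * (I : ℝ) * (∑ j, Lc j) / τ) * ex := by ring
  refine ⟨hbound, fun hex hey => ?_⟩
  have hg : Tendsto (fun n =>
      ((I : ℝ) / τ) *
          Real.sqrt (∑ j, ‖y n j - (I : ℝ)⁻¹ • ∑ l, φ n l • y n l‖ ^ 2)
        + (2 * (I : ℝ) * (∑ j, Lc j) / τ) *
          Real.sqrt (∑ j, ‖x n j - (I : ℝ)⁻¹ • ∑ l, φ n l • x n l‖ ^ 2))
      atTop (nhds 0) := by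
    have := (hey.const_mul ((I : ℝ) / τ)).add
      (hex.const_mul (2 * (I : ℝ) * (∑ j, Lc j) / τ))
    simpa using this
  exact squeeze_zero (fun n => norm_nonneg _) hbound hg
end

section
/- In the SONATA consensus step x^{n+1} = Ŵ^n (x^n + α^n Δx^n) with Ŵ^n = W^n ⊗ I_m row-stochastic, and gradient-tracking perturbation δ^{n+1} = (D̂_{φ^{n+1}})^{−1}(g^{n+1} − g^n) where g_i^n = ∇f_i(x_i^n), each ∇f_i is L_mx-Lipschitz, and all entries of φ^{n+1} are ≥ φ_lb > 0: the perturbation satisfies ‖δ^{n+1}‖ ≤ L_mx φ_lb^{−1} ( (√I + 1) ‖e_x^n‖ + √I α^n ‖Δx^n‖ ), where e_x^n = x^n − 1 ⊗ x̄_φ^n is the consensus disagreement. -/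
open Finset

section Helpers

variable {n : ℕ} {E : Type*} [NormedAddCommGroup E] [NormedSpace ℝ E]

lemma l2norm_eq (u : Fin n → E) :
    Real.sqrt (∑ i, ‖u i‖ ^ 2) = ‖(WithLp.equiv 2 (∀ _ : Fin n, E)).symm u‖ := by
  rw [PiLp.norm_eq_of_L2]
  rfl

lemma l2_triangle (u v : Fin n → E) :
    Real.sqrt (∑ i, ‖u i + v i‖ ^ 2) ≤
      Real.sqrt (∑ i, ‖u i‖ ^ 2) + Real.sqrt (∑ i, ‖v i‖ ^ 2) := by
  rw [l2norm_eq, l2norm_eq, l2norm_eq]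
  exact norm_add_le _ _

lemma l2_mono (u : Fin n → E) (b : Fin n → ℝ) (h : ∀ i, ‖u i‖ ≤ b i) :
    Real.sqrt (∑ i, ‖u i‖ ^ 2) ≤ Real.sqrt (∑ i, b i ^ 2) := by
  apply Real.sqrt_le_sqrt
  apply Finset.sum_le_sum
  intro i _
  exact pow_le_pow_left₀ (norm_nonneg _) (h i) 2

lemma l2_const_mul (c : ℝ) (hc : 0 ≤ c) (t : Fin n → ℝ) :
    Real.sqrt (∑ i, (c * t i) ^ 2) = c * Real.sqrt (∑ i, t i ^ 2) := by
  have : ∑ i, (c * t i) ^ 2 = c ^ 2 * ∑ i, t i ^ 2 := by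
    rw [Finset.mul_sum]; congr 1; ext i; ring
  rw [this, Real.sqrt_mul (sq_nonneg c), Real.sqrt_sq hc]

lemma l2_smul (c : ℝ) (hc : 0 ≤ c) (u : Fin n → E) :
    Real.sqrt (∑ i, ‖c • u i‖ ^ 2) = c * Real.sqrt (∑ i, ‖u i‖ ^ 2) := by
  simp_rw [norm_smul, Real.norm_eq_abs, abs_of_nonneg hc]
  exact l2_const_mul c hc _

/-- Row‐stochastic mixing bound: each row's combination has norm ≤ √(∑‖v j‖²). -/
lemma row_bound (W : Matrix (Fin n) (Fin n) ℝ) (hW_nonneg : ∀ i j, 0 ≤ W i j)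
    (hW_row : ∀ i, ∑ j, W i j = 1) (v : Fin n → E) (i : Fin n) :
    ‖∑ j, W i j • v j‖ ≤ Real.sqrt (∑ j, ‖v j‖ ^ 2) := by
  have h1 : ‖∑ j, W i j • v j‖ ≤ ∑ j, W i j * ‖v j‖ := by
    refine (norm_sum_le _ _).trans (le_of_eq ?_)
    congr 1; ext j
    rw [norm_smul, Real.norm_eq_abs, abs_of_nonneg (hW_nonneg i j)]
  have hsq : (∑ j, W i j * ‖v j‖) ^ 2 ≤ ∑ j, ‖v j‖ ^ 2 := by
    calc (∑ j, W i j * ‖v j‖) ^ 2 ≤ (∑ j, W i j ^ 2) * ∑ j, ‖v j‖ ^ 2 :=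
          Finset.sum_mul_sq_le_sq_mul_sq _ _ _
      _ ≤ 1 * ∑ j, ‖v j‖ ^ 2 := by
          apply mul_le_mul_of_nonneg_right
          · calc ∑ j, W i j ^ 2 ≤ ∑ j, W i j := by
                  apply Finset.sum_le_sum
                  intro j _
                  have hle1 : W i j ≤ 1 := by
                    rw [← hW_row i]
                    exact Finset.single_le_sum (fun k _ => hW_nonneg i k) (Finset.mem_univ j)
                  nlinarith [hW_nonneg i j]
              _ = 1 := hW_row i
          · exact Finset.sum_nonneg fun j _ => sq_nonneg _
      _ = ∑ j, ‖v j‖ ^ 2 := one_mul _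
  have hnn : 0 ≤ ∑ j, W i j * ‖v j‖ :=
    Finset.sum_nonneg fun j _ => mul_nonneg (hW_nonneg i j) (norm_nonneg _)
  refine h1.trans ?_
  rw [show (∑ j, W i j * ‖v j‖) = Real.sqrt ((∑ j, W i j * ‖v j‖) ^ 2) from
    (Real.sqrt_sq hnn).symm]
  exact Real.sqrt_le_sqrt hsq

lemma mix_bound (W : Matrix (Fin n) (Fin n) ℝ) (hW_nonneg : ∀ i j, 0 ≤ W i j)
    (hW_row : ∀ i, ∑ j, W i j = 1) (v : Fin n → E) :
    Real.sqrt (∑ i, ‖∑ j, W i j • v j‖ ^ 2) ≤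
      Real.sqrt n * Real.sqrt (∑ j, ‖v j‖ ^ 2) := by
  have h : ∑ i, ‖∑ j, W i j • v j‖ ^ 2 ≤ ∑ _i : Fin n, (∑ j, ‖v j‖ ^ 2) := by
    apply Finset.sum_le_sum
    intro i _
    have := row_bound W hW_nonneg hW_row v i
    calc ‖∑ j, W i j • v j‖ ^ 2 ≤ Real.sqrt (∑ j, ‖v j‖ ^ 2) ^ 2 :=
          pow_le_pow_left₀ (norm_nonneg _) this 2
      _ = ∑ j, ‖v j‖ ^ 2 :=
          Real.sq_sqrt (Finset.sum_nonneg fun j _ => sq_nonneg _)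
  calc Real.sqrt (∑ i, ‖∑ j, W i j • v j‖ ^ 2)
      ≤ Real.sqrt (∑ _i : Fin n, (∑ j, ‖v j‖ ^ 2)) := Real.sqrt_le_sqrt h
    _ = Real.sqrt ((n : ℝ) * ∑ j, ‖v j‖ ^ 2) := by
        rw [Finset.sum_const, Finset.card_univ, Fintype.card_fin, nsmul_eq_mul]
    _ = Real.sqrt n * Real.sqrt (∑ j, ‖v j‖ ^ 2) := Real.sqrt_mul (Nat.cast_nonneg n) _

end Helpers

/-- Bound on the gradient-tracking perturbation in the SONATA consensus step. -/
theorem stmt19 (I mdim : ℕ) (hI : 0 < I)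
    (W : Matrix (Fin I) (Fin I) ℝ)
    (hW_nonneg : ∀ i j, 0 ≤ W i j) (hW_row : ∀ i, ∑ j, W i j = 1)
    (φ : Fin I → ℝ) (hφ_nonneg : ∀ i, 0 ≤ φ i) (hφ_sum : ∑ i, φ i = (I : ℝ))
    (φ' : Fin I → ℝ) (φlb : ℝ) (hφlb : 0 < φlb) (hφ' : ∀ i, φlb ≤ φ' i)
    (f : Fin I → EuclideanSpace ℝ (Fin mdim) → ℝ)
    (gf : Fin I → EuclideanSpace ℝ (Fin mdim) → EuclideanSpace ℝ (Fin mdim))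
    (hgf : ∀ i z, HasGradientAt (f i) (gf i z) z)
    (Lmx : ℝ) (hLmx : 0 ≤ Lmx)
    (hLip : ∀ i a b, ‖gf i a - gf i b‖ ≤ Lmx * ‖a - b‖)
    (α : ℝ) (hα : 0 ≤ α)
    (x Δx : Fin I → EuclideanSpace ℝ (Fin mdim)) :
    Real.sqrt (∑ i,
        ‖(φ' i)⁻¹ • (gf i (∑ j, W i j • (x j + α • Δx j)) - gf i (x i))‖ ^ 2) ≤
      Lmx * φlb⁻¹ *
        ((Real.sqrt I + 1) *
            Real.sqrt (∑ i, ‖x i - (I : ℝ)⁻¹ • ∑ j, φ j • x j‖ ^ 2)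
          + Real.sqrt I * α * Real.sqrt (∑ i, ‖Δx i‖ ^ 2)) := by
  set xbar : EuclideanSpace ℝ (Fin mdim) := (I : ℝ)⁻¹ • ∑ j, φ j • x j with hxbar
  set e : Fin I → EuclideanSpace ℝ (Fin mdim) := fun i => x i - xbar with he
  set c : ℝ := Lmx * φlb⁻¹ with hc
  have hcnn : 0 ≤ c := mul_nonneg hLmx (inv_nonneg.mpr hφlb.le)
  set d : Fin I → EuclideanSpace ℝ (Fin mdim) :=
    fun i => (∑ j, W i j • (x j + α • Δx j)) - x i with hd
  -- Step 1: pointwise Lipschitz bound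
  have hpt : ∀ i,
      ‖(φ' i)⁻¹ • (gf i (∑ j, W i j • (x j + α • Δx j)) - gf i (x i))‖ ≤ c * ‖d i‖ := by
    intro i
    have hφ'pos : 0 < φ' i := lt_of_lt_of_le hφlb (hφ' i)
    rw [norm_smul, Real.norm_eq_abs, abs_of_nonneg (inv_nonneg.mpr hφ'pos.le)]
    have h1 : ‖gf i (∑ j, W i j • (x j + α • Δx j)) - gf i (x i)‖ ≤ Lmx * ‖d i‖ :=
      hLip i _ _
    have h2 : (φ' i)⁻¹ ≤ φlb⁻¹ := inv_anti₀ hφlb (hφ' i)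
    calc (φ' i)⁻¹ * ‖gf i (∑ j, W i j • (x j + α • Δx j)) - gf i (x i)‖
        ≤ φlb⁻¹ * (Lmx * ‖d i‖) := by
          apply mul_le_mul h2 h1 (norm_nonneg _)
          exact inv_nonneg.mpr hφlb.le
      _ = c * ‖d i‖ := by rw [hc]; ring
  -- Step 2: decomposition of d
  have hdecomp : ∀ i, d i = ((∑ j, W i j • e j) + (-e i)) + α • ∑ j, W i j • Δx j := by
    intro i
    have h1 : ∑ j, W i j • (x j + α • Δx j)
        = (∑ j, W i j • x j) + α • ∑ j, W i j • Δx j := by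
      rw [Finset.smul_sum]
      rw [← Finset.sum_add_distrib]
      congr 1; ext j
      rw [smul_add, smul_comm]
    have h2 : ∑ j, W i j • e j = (∑ j, W i j • x j) - xbar := by
      simp only [he, smul_sub]
      rw [Finset.sum_sub_distrib, ← Finset.sum_smul, hW_row i, one_smul]
    show (∑ j, W i j • (x j + α • Δx j)) - x i = _
    rw [h1, h2]
    simp only [he]
    abel
  -- Step 3: chain of bounds
  have Se_nn : (0:ℝ) ≤ Real.sqrt (∑ i, ‖e i‖ ^ 2) := Real.sqrt_nonneg _
  have hmain : Real.sqrt (∑ i, ‖d i‖ ^ 2) ≤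
      (Real.sqrt I + 1) * Real.sqrt (∑ i, ‖e i‖ ^ 2)
        + Real.sqrt I * α * Real.sqrt (∑ i, ‖Δx i‖ ^ 2) := by
    have step1 : Real.sqrt (∑ i, ‖d i‖ ^ 2) ≤
        Real.sqrt (∑ i, ‖(∑ j, W i j • e j) + (-e i)‖ ^ 2)
          + Real.sqrt (∑ i, ‖α • ∑ j, W i j • Δx j‖ ^ 2) := by
      have := l2_triangle (fun i => (∑ j, W i j • e j) + (-e i))
        (fun i => α • ∑ j, W i j • Δx j)
      simp only [← hdecomp] at this
      exact this
    have step2 : Real.sqrt (∑ i, ‖(∑ j, W i j • e j) + (-e i)‖ ^ 2) ≤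
        Real.sqrt I * Real.sqrt (∑ i, ‖e i‖ ^ 2) + Real.sqrt (∑ i, ‖e i‖ ^ 2) := by
      refine (l2_triangle (fun i => ∑ j, W i j • e j) (fun i => -e i)).trans ?_
      have h2' : Real.sqrt (∑ i, ‖-e i‖ ^ 2) = Real.sqrt (∑ i, ‖e i‖ ^ 2) := by
        simp [norm_neg]
      exact add_le_add (mix_bound W hW_nonneg hW_row e) (le_of_eq h2')
    have step3 : Real.sqrt (∑ i, ‖α • ∑ j, W i j • Δx j‖ ^ 2) ≤
        Real.sqrt I * α * Real.sqrt (∑ i, ‖Δx i‖ ^ 2) := by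
      rw [l2_smul α hα]
      rw [mul_comm (Real.sqrt I) α, mul_assoc]
      exact mul_le_mul_of_nonneg_left (mix_bound W hW_nonneg hW_row Δx) hα
    calc Real.sqrt (∑ i, ‖d i‖ ^ 2)
        ≤ Real.sqrt (∑ i, ‖(∑ j, W i j • e j) + (-e i)‖ ^ 2)
            + Real.sqrt (∑ i, ‖α • ∑ j, W i j • Δx j‖ ^ 2) := step1
      _ ≤ (Real.sqrt I * Real.sqrt (∑ i, ‖e i‖ ^ 2) + Real.sqrt (∑ i, ‖e i‖ ^ 2))
            + Real.sqrt I * α * Real.sqrt (∑ i, ‖Δx i‖ ^ 2) := by gcongr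
      _ = (Real.sqrt I + 1) * Real.sqrt (∑ i, ‖e i‖ ^ 2)
            + Real.sqrt I * α * Real.sqrt (∑ i, ‖Δx i‖ ^ 2) := by ring
  calc Real.sqrt (∑ i,
        ‖(φ' i)⁻¹ • (gf i (∑ j, W i j • (x j + α • Δx j)) - gf i (x i))‖ ^ 2)
      ≤ Real.sqrt (∑ i, (c * ‖d i‖) ^ 2) := l2_mono _ _ hpt
    _ = c * Real.sqrt (∑ i, ‖d i‖ ^ 2) := l2_const_mul c hcnn _
    _ ≤ c * ((Real.sqrt I + 1) * Real.sqrt (∑ i, ‖e i‖ ^ 2)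
          + Real.sqrt I * α * Real.sqrt (∑ i, ‖Δx i‖ ^ 2)) :=
        mul_le_mul_of_nonneg_left hmain hcnn
    _ = Lmx * φlb⁻¹ *
        ((Real.sqrt I + 1) * Real.sqrt (∑ i, ‖x i - (I : ℝ)⁻¹ • ∑ j, φ j • x j‖ ^ 2)
          + Real.sqrt I * α * Real.sqrt (∑ i, ‖Δx i‖ ^ 2)) := by rw [hc]
end
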